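/- Let (W,S) be a Coxeter system and u, w ∈ W. Then w ◁ u^{-1} = e if and only if w ≤ u in Bruhat order, where ◁ denotes the downward Demazure action. -/

import Mathlib

namespace DBS
open CoxeterSystem
open scoped Classical

variable {B W : Type*} [Group W] {M : CoxeterMatrix B} (cs : CoxeterSystem M W)

/-- Bruhat order on a Coxeter group: `u ≤ w` iff some reduced word for `w`
has a subword with product `u`. -/
def bruhatLE (u w : W) : Prop :=
  ∃ ω : List B, cs.IsReduced ω ∧ cs.wordProd ω = w ∧
    ∃ ω' : List B, ω'.Sublist ω ∧ cs.wordProd ω' = u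

/-- Strict Bruhat order. -/
def bruhatLT (u w : W) : Prop := bruhatLE cs u w ∧ u ≠ w

/-- Demazure product `s * w = max{sw, w}` in Bruhat order. -/
noncomputable def demL (i : B) (w : W) : W :=
  if bruhatLT cs w (cs.simple i * w) then cs.simple i * w else w

/-- `s ▷ w = min{sw, w}` in Bruhat order. -/
noncomputable def minL (i : B) (w : W) : W :=
  if bruhatLT cs (cs.simple i * w) w then cs.simple i * w else w

/-- `w ◁ s = min{ws, w}` in Bruhat order. -/
noncomputable def demR (w : W) (i : B) : W :=
  if bruhatLT cs (w * cs.simple i) w then w * cs.simple i else w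

/-- Demazure product `s₁ * (s₂ * (⋯ * s_l))` of a word of simple reflections. -/
noncomputable def dprodWord (ω : List B) : W := ω.foldr (demL cs) 1

/-- Demazure product of the sequence of simple reflections indexed by `u`. -/
noncomputable def dprodFn {l : ℕ} (u : Fin l → B) : W := dprodWord cs (List.ofFn u)

/-- Partial product `γ^j = γ₁ ⋯ γ_j`. -/
noncomputable def pp {l : ℕ} (γ : Fin l → W) (j : ℕ) : W := ((List.ofFn γ).take j).prod

/-- `γ` is a subexpression of the word of simple reflections indexed by `u`. -/
def IsSubexpr {l : ℕ} (u : Fin l → B) (γ : Fin l → W) : Prop :=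
  ∀ j : Fin l, γ j = 1 ∨ γ j = cs.simple (u j)

/-- `γ` is a positive subexpression: `γ^{j-1} = γ^j ◁ s_j` for all `j`. -/
def IsPositive {l : ℕ} (u : Fin l → B) (γ : Fin l → W) : Prop :=
  ∀ j : Fin l, pp γ (j : ℕ) = demR cs (pp γ ((j : ℕ) + 1)) (u j)

/-- The result of applying `◁` along a word of simple reflections. -/
noncomputable def demRword (w : W) (ω : List B) : W := ω.foldl (demR cs) w


open List

local prefix:100 "s" => cs.simple
local prefix:100 "π" => cs.wordProd
local prefix:100 "ℓ" => cs.length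




/-- The sign-flipping action of a simple reflection on `W × ℤˣ`. -/
noncomputable def phi (i : B) : Function.End (W × ℤˣ) :=
  fun p => (s i * p.1 * s i, if p.1 = s i then -p.2 else p.2)

lemma count_map_shift_one {W' : Type*} [DecidableEq W'] {m : ℕ} (g : ℕ → W') (hg : g m = g 0)
    (t : W') :
    List.count t (List.map (fun r => g (r + 1)) (List.range m)) =
      List.count t (List.map g (List.range m)) := by
  cases m with
  | zero => simp
  | succ n =>
    have hL : List.count t (List.map (fun r => g (r + 1)) (List.range (n+1)))
        = List.count t (List.map (fun r => g (r + 1)) (List.range n))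
          + (if g (n + 1) = t then 1 else 0) := by
      rw [List.range_succ, List.map_append, List.count_append, List.map_singleton,
        List.count_singleton']
    have hR : List.count t (List.map g (List.range (n+1)))
        = List.count t (List.map (fun r => g (r + 1)) (List.range n))
          + (if g 0 = t then 1 else 0) := by
      rw [List.range_succ_eq_map, List.map_cons, List.count_cons, List.map_map]
      simp [Function.comp_def, Nat.succ_eq_add_one, beq_iff_eq]
    rw [hL, hR, hg]

lemma count_map_shift {W' : Type*} [DecidableEq W'] {m : ℕ} (g : ℕ → W')
    (hg : ∀ r, g (r + m) = g r) (c : ℕ) (t : W') :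
    List.count t (List.map (fun r => g (r + c)) (List.range m)) =
      List.count t (List.map g (List.range m)) := by
  induction c with
  | zero => simp
  | succ c ih =>
    have h1 : (fun r => g (r + (c + 1))) = (fun r => (fun x => g (x + c)) (r + 1)) := by
      funext r; congr 1; omega
    have h2 : (fun x => g (x + c)) m = (fun x => g (x + c)) 0 := by
      show g (m + c) = g (0 + c)
      rw [Nat.add_comm m c, hg c, Nat.zero_add]
    rw [h1, count_map_shift_one (fun x => g (x + c)) h2 t]
    exact ih

lemma phi_phi_pow_apply (i j : B) (k : ℕ) (t : W) (ε : ℤˣ) :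
    ((phi cs i * phi cs j) ^ k) (t, ε) =
      ((s i * s j) ^ k * t * ((s i * s j) ^ k)⁻¹,
        ε * (-1) ^ (List.count t (List.map (fun r => ((s i * s j) ^ r)⁻¹ * s j * (s i * s j) ^ r)
              (List.range k))
            + List.count t (List.map (fun r => ((s i * s j) ^ r)⁻¹ * (s j * s i * s j) * (s i * s j) ^ r)
              (List.range k)))) := by
  induction k with
  | zero => simp; rfl
  | succ k ih =>
    rw [pow_succ']
    set P := (s i * s j) ^ k with hP
    have heval : ((phi cs i * phi cs j * (phi cs i * phi cs j) ^ k)) (t, ε)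
        = (phi cs i) ((phi cs j) (((phi cs i * phi cs j) ^ k) (t, ε))) := rfl
    rw [heval, ih]
    set uk := P⁻¹ * s j * P with huk
    set vk := P⁻¹ * (s j * s i * s j) * P with hvk
    have hcu : List.count t (List.map (fun r => ((s i * s j) ^ r)⁻¹ * s j * (s i * s j) ^ r)
          (List.range (k+1)))
        = List.count t (List.map (fun r => ((s i * s j) ^ r)⁻¹ * s j * (s i * s j) ^ r)
          (List.range k)) + (if uk = t then 1 else 0) := by
      rw [List.range_succ, List.map_append, List.count_append, List.map_singleton,
        List.count_singleton']
    have hcv : List.count t (List.map (fun r => ((s i * s j) ^ r)⁻¹ * (s j * s i * s j) * (s i * s j) ^ r)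
          (List.range (k+1)))
        = List.count t (List.map (fun r => ((s i * s j) ^ r)⁻¹ * (s j * s i * s j) * (s i * s j) ^ r)
          (List.range k)) + (if vk = t then 1 else 0) := by
      rw [List.range_succ, List.map_append, List.count_append, List.map_singleton,
        List.count_singleton']
    rw [hcu, hcv]
    set a := List.count t (List.map (fun r => ((s i * s j) ^ r)⁻¹ * s j * (s i * s j) ^ r)
          (List.range k)) with ha
    set b := List.count t (List.map (fun r => ((s i * s j) ^ r)⁻¹ * (s j * s i * s j) * (s i * s j) ^ r)
          (List.range k)) with hb
    have hcond1 : (P * t * P⁻¹ = s j) ↔ uk = t := by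
      constructor
      · intro h; rw [huk, ← h]; group
      · intro h; rw [← h, huk]; group
    have hcond2 : (s j * (P * t * P⁻¹) * s j = s i) ↔ vk = t := by
      constructor
      · intro h
        have hX : P * t * P⁻¹ = (s j)⁻¹ * s i * (s j)⁻¹ := by rw [← h]; group
        have ht : t = P⁻¹ * (P * t * P⁻¹) * P := by group
        rw [hvk, ht, hX, cs.inv_simple]
      · intro h
        rw [← h, hvk]
        have hc : s j * (P * (P⁻¹ * (s j * s i * s j) * P) * P⁻¹) * s j
            = s j * (s j * s i * s j) * s j := by group
        rw [hc]
        simp [mul_assoc, cs.simple_mul_simple_cancel_left, cs.simple_mul_simple_self]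
    have hfirst : s i * (s j * (P * t * P⁻¹) * s j) * s i
        = (s i * s j) ^ (k+1) * t * ((s i * s j) ^ (k+1))⁻¹ := by
      rw [pow_succ', ← hP]
      simp [mul_assoc, mul_inv_rev]
    show (phi cs i) ((phi cs j) (P * t * P⁻¹, ε * (-1) ^ (a + b))) = _
    simp only [phi]
    rw [Prod.mk.injEq]
    constructor
    · exact hfirst
    · simp only [hcond1, hcond2]
      by_cases h1 : uk = t <;> by_cases h2 : vk = t <;>
        simp [h1, h2, pow_succ, pow_add]


lemma simple_mul_pow_comm (i j : B) (e : ℕ) :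
    s j * (s i * s j) ^ e = ((s i * s j) ^ e)⁻¹ * s j := by
  rw [← inv_pow]
  induction e with
  | zero => simp
  | succ e ih =>
    have hbase : s j * (s i * s j) = (s i * s j)⁻¹ * s j := by
      rw [mul_inv_rev, cs.inv_simple, cs.inv_simple]
      group
    rw [pow_succ, ← mul_assoc, ih, mul_assoc, hbase, ← mul_assoc, ← pow_succ]

lemma sjsisj_mul_pow_comm (i j : B) (e : ℕ) :
    (s j * s i * s j) * (s i * s j) ^ e = ((s i * s j) ^ e)⁻¹ * (s j * s i * s j) := by
  rw [← inv_pow]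
  induction e with
  | zero => simp
  | succ e ih =>
    have hbase : (s j * s i * s j) * (s i * s j) = (s i * s j)⁻¹ * (s j * s i * s j) := by
      rw [mul_inv_rev, cs.inv_simple, cs.inv_simple]
      group
    rw [pow_succ, ← mul_assoc, ih, mul_assoc, hbase, ← mul_assoc, ← pow_succ]

lemma conj_pow_simple_eq (i j : B) (e : ℕ) :
    ((s i * s j) ^ e)⁻¹ * s j * (s i * s j) ^ e = s j * (s i * s j) ^ (2 * e) := by
  have h := simple_mul_pow_comm cs i j e
  rw [← h, mul_assoc, ← pow_add, two_mul]

lemma conj_pow_sjsisj_eq (i j : B) (e : ℕ) :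
    ((s i * s j) ^ e)⁻¹ * (s j * s i * s j) * (s i * s j) ^ e
      = (s j * s i * s j) * (s i * s j) ^ (2 * e) := by
  have h := sjsisj_mul_pow_comm cs i j e
  rw [← h, mul_assoc, ← pow_add, two_mul]

lemma phi_liftable : M.IsLiftable (phi cs) := by
  intro i j
  set m := M i j with hm
  have hp : (s i * s j) ^ m = 1 := cs.simple_mul_simple_pow i j
  funext p
  obtain ⟨t, ε⟩ := p
  rw [phi_phi_pow_apply, hp]
  set u : ℕ → W := fun r => ((s i * s j) ^ r)⁻¹ * s j * (s i * s j) ^ r with hu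
  set v : ℕ → W := fun r => ((s i * s j) ^ r)⁻¹ * (s j * s i * s j) * (s i * s j) ^ r with hv
  have huper : ∀ r, u (r + m) = u r := by
    intro r; simp only [hu, pow_add, hp, mul_one]
  have heven : Even (List.count t (List.map u (List.range m))
      + List.count t (List.map v (List.range m))) := by
    rcases Nat.even_or_odd m with he | ho
    · obtain ⟨l, hl⟩ := he
      have hhalf : ∀ (f : ℕ → W), (∀ x, f (x + l) = f x) →
          List.count t (List.map f (List.range m)) % 2 = 0 := by
        intro f hf
        have hll : m = l + l := hl
        rw [hll, List.range_add, List.map_append, List.count_append]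
        have hmc : List.map f (List.map (fun x => l + x) (List.range l))
            = List.map f (List.range l) := by
          rw [List.map_map]
          apply List.map_congr_left
          intro x _
          show f (l + x) = f x
          rw [Nat.add_comm l x, hf x]
        rw [hmc]
        omega
      have hul : ∀ x, u (x + l) = u x := by
        intro x
        show ((s i * s j) ^ (x+l))⁻¹ * s j * (s i * s j) ^ (x+l)
            = ((s i * s j) ^ x)⁻¹ * s j * (s i * s j) ^ x
        rw [conj_pow_simple_eq, conj_pow_simple_eq]
        have h4 : 2 * (x + l) = 2 * x + m := by omega
        rw [h4, pow_add, hp, mul_one]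
      have hvl : ∀ x, v (x + l) = v x := by
        intro x
        show ((s i * s j) ^ (x+l))⁻¹ * (s j * s i * s j) * (s i * s j) ^ (x+l)
            = ((s i * s j) ^ x)⁻¹ * (s j * s i * s j) * (s i * s j) ^ x
        rw [conj_pow_sjsisj_eq, conj_pow_sjsisj_eq]
        have h4 : 2 * (x + l) = 2 * x + m := by omega
        rw [h4, pow_add, hp, mul_one]
      have e1 := hhalf u hul
      have e2 := hhalf v hvl
      rw [Nat.even_iff]
      omega
    · obtain ⟨l, hl⟩ := ho
      have hveq : v = fun r => u (r + (l + 1)) := by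
        funext r
        show ((s i * s j) ^ r)⁻¹ * (s j * s i * s j) * (s i * s j) ^ r
            = ((s i * s j) ^ (r+(l+1)))⁻¹ * s j * (s i * s j) ^ (r+(l+1))
        rw [conj_pow_sjsisj_eq, conj_pow_simple_eq]
        have h4 : 2 * (r + (l + 1)) = (2 * r + 1) + m := by omega
        rw [h4, pow_add, hp, mul_one, pow_succ', ← mul_assoc]
        congr 1
        rw [mul_assoc]
      rw [hveq, count_map_shift u huper (l+1) t, ← two_mul]
      exact even_two_mul _
  rw [Even.neg_one_pow heven]
  have h1 : (1 : Function.End (W × ℤˣ)) (t, ε) = (t, ε) := rfl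
  rw [h1]
  simp

/-- The sign homomorphism into `Function.End (W × ℤˣ)`. -/
noncomputable def FF : W →* Function.End (W × ℤˣ) := cs.lift ⟨phi cs, phi_liftable cs⟩

lemma FF_simple (i : B) : FF cs (s i) = phi cs i := cs.lift_apply_simple (phi_liftable cs) i

lemma FF_wordProd (ω : List B) : FF cs (π ω) = (ω.map (phi cs)).prod := by
  unfold CoxeterSystem.wordProd
  rw [MonoidHom.map_list_prod, List.map_map]
  congr 1
  apply List.map_congr_left
  intro i _
  exact FF_simple cs i

lemma prodphi_apply (ω : List B) (t : W) (ε : ℤˣ) :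
    ((ω.map (phi cs)).prod) (t, ε)
      = (π ω * t * (π ω)⁻¹, ε * (-1) ^ (List.count t (cs.rightInvSeq ω))) := by
  induction ω with
  | nil => simp; rfl
  | cons i ω ih =>
    rw [List.map_cons, List.prod_cons]
    have heval : ((phi cs i * (List.map (phi cs) ω).prod)) (t, ε)
        = phi cs i (((List.map (phi cs) ω).prod) (t, ε)) := rfl
    rw [heval, ih]
    have hris : cs.rightInvSeq (i :: ω) = ((π ω)⁻¹ * s i * π ω) :: cs.rightInvSeq ω := rfl
    rw [hris, List.count_cons]
    simp only [phi]
    rw [Prod.mk.injEq]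
    constructor
    · rw [cs.wordProd_cons, mul_inv_rev, cs.inv_simple]
      group
    · have hcond : (π ω * t * (π ω)⁻¹ = s i) ↔ ((π ω)⁻¹ * s i * π ω == t) = true := by
        rw [beq_iff_eq]
        constructor
        · intro h; rw [← h]; group
        · intro h; rw [← h]; group
      by_cases hc : π ω * t * (π ω)⁻¹ = s i
      · rw [if_pos hc, if_pos (hcond.mp hc), pow_succ]
        rw [mul_neg_one, mul_neg]
      · rw [if_neg hc, if_neg (fun h => hc (hcond.mpr h))]
        simp

lemma ris_count_parity {ω ω' : List B} (h : π ω = π ω') (t : W) :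
    ((-1 : ℤˣ)) ^ (List.count t (cs.rightInvSeq ω))
      = (-1) ^ (List.count t (cs.rightInvSeq ω')) := by
  have h1 := prodphi_apply cs ω t 1
  have h2 := prodphi_apply cs ω' t 1
  rw [← FF_wordProd] at h1 h2
  rw [h, h2] at h1
  have h3 := congrArg Prod.snd h1
  simpa using h3.symm

lemma rightInvSeq_append (ω₁ ω₂ : List B) :
    cs.rightInvSeq (ω₁ ++ ω₂)
      = (cs.rightInvSeq ω₁).map (fun t => (π ω₂)⁻¹ * t * π ω₂) ++ cs.rightInvSeq ω₂ := by
  induction ω₁ with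
  | nil => simp
  | cons i ω₁ ih =>
    have h1 : cs.rightInvSeq ((i :: ω₁) ++ ω₂)
        = ((π (ω₁ ++ ω₂))⁻¹ * s i * π (ω₁ ++ ω₂)) :: cs.rightInvSeq (ω₁ ++ ω₂) := rfl
    have h2 : cs.rightInvSeq (i :: ω₁) = ((π ω₁)⁻¹ * s i * π ω₁) :: cs.rightInvSeq ω₁ := rfl
    rw [h1, h2, ih, List.map_cons, cs.wordProd_append, List.cons_append]
    congr 1
    rw [mul_inv_rev]
    group

lemma leftInvSeq_eq_map_conj (χ : List B) :
    cs.leftInvSeq χ = (cs.rightInvSeq χ).map (fun t => π χ * t * (π χ)⁻¹) := by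
  induction χ with
  | nil => simp
  | cons i χ ih =>
    have h1 : cs.leftInvSeq (i :: χ) = s i :: (cs.leftInvSeq χ).map (⇑(MulAut.conj (s i))) := rfl
    have h2 : cs.rightInvSeq (i :: χ) = ((π χ)⁻¹ * s i * π χ) :: cs.rightInvSeq χ := rfl
    rw [h1, h2, ih, List.map_cons, List.map_map, cs.wordProd_cons]
    congr 1
    · have h3 : (s i * π χ) * ((π χ)⁻¹ * s i * π χ) * (s i * π χ)⁻¹ = s i * (s i * s i) := by
        rw [mul_inv_rev, cs.inv_simple]
        group
      rw [h3, cs.simple_mul_simple_cancel_left]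
    · apply List.map_congr_left
      intro t _
      show MulAut.conj (s i) (π χ * t * (π χ)⁻¹) = (s i * π χ) * t * (s i * π χ)⁻¹
      rw [MulAut.conj_apply, mul_inv_rev, cs.inv_simple]
      group

lemma count_ris_palindrome_odd (χ : List B) (i : B) (t : W)
    (ht : t = π χ * s i * (π χ)⁻¹) :
    Odd (List.count t (cs.rightInvSeq (χ ++ [i] ++ χ.reverse))) := by
  rw [List.append_assoc, rightInvSeq_append cs, List.count_append]
  rw [rightInvSeq_append cs, List.count_append]
  have hinj : ∀ (g : W), Function.Injective (fun y : W => g⁻¹ * y * g) := by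
    intro g y z h
    simp only at h
    have := congrArg (fun w => g * w * g⁻¹) h
    simpa [mul_assoc] using this
  -- first part
  have hA : List.count t
      ((cs.rightInvSeq χ).map (fun y => (π ([i] ++ χ.reverse))⁻¹ * y * π ([i] ++ χ.reverse)))
      = List.count (s i) (cs.rightInvSeq χ) := by
    have hts : (fun y => (π ([i] ++ χ.reverse))⁻¹ * y * π ([i] ++ χ.reverse)) (s i) = t := by
      show (π ([i] ++ χ.reverse))⁻¹ * s i * π ([i] ++ χ.reverse) = t
      simp only [cs.wordProd_append, cs.wordProd_singleton, cs.wordProd_reverse, mul_inv_rev,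
        cs.inv_simple, inv_inv, ht]
      simp [mul_assoc, cs.simple_mul_simple_cancel_left]
    rw [← hts, List.count_map_of_injective _ _ (hinj _)]
  -- middle part
  have hB : List.count t ((cs.rightInvSeq [i]).map (fun y => (π χ.reverse)⁻¹ * y * π χ.reverse))
      = 1 := by
    have h1 : cs.rightInvSeq [i] = [s i] := cs.rightInvSeq_singleton i
    rw [h1, List.map_singleton]
    have h2 : (π χ.reverse)⁻¹ * s i * π χ.reverse = t := by
      rw [cs.wordProd_reverse, inv_inv, ht]
    rw [h2]
    simp
  -- last part
  have hC : List.count t (cs.rightInvSeq χ.reverse) = List.count (s i) (cs.rightInvSeq χ) := by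
    rw [cs.rightInvSeq_reverse, List.count_reverse, leftInvSeq_eq_map_conj cs]
    have hts : (fun y : W => π χ * y * (π χ)⁻¹) (s i) = t := ht.symm
    rw [← hts]
    exact List.count_map_of_injective (cs.rightInvSeq χ) (fun y : W => π χ * y * (π χ)⁻¹)
      (fun y z h => by
      have h5 := congrArg (fun w => (π χ)⁻¹ * w * π χ) h
      simpa [mul_assoc] using h5) (s i)

  rw [hA, hB, hC]
  exact ⟨List.count (s i) (cs.rightInvSeq χ), by ring⟩

lemma mem_rightInvSeq_of_isRightInversion {ω : List B} (hω : cs.IsReduced ω) {t : W}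
    (ht : cs.IsReflection t) (hlt : ℓ (π ω * t) < ℓ (π ω)) : t ∈ cs.rightInvSeq ω := by
  by_contra hmem
  have hc0 : List.count t (cs.rightInvSeq ω) = 0 := List.count_eq_zero.mpr hmem
  obtain ⟨τ, hτlen, hτprod⟩ := cs.exists_reduced_word (π ω * t)
  have hτred : cs.IsReduced τ := by
    unfold CoxeterSystem.IsReduced
    exact hτlen
  have htt : t * t = 1 := ht.mul_self
  have hcτ : List.count t (cs.rightInvSeq τ) = 0 := by
    rw [List.count_eq_zero]
    intro hmemτ
    have hinv := cs.isRightInversion_of_mem_rightInvSeq hτred hmemτ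
    rw [← hτprod] at hinv
    have h2 : π ω * t * t = π ω := by rw [mul_assoc, htt, mul_one]
    have h3 := hinv.2
    rw [h2] at h3
    omega
  obtain ⟨x, k, hxk⟩ := ht
  obtain ⟨χ, hχ⟩ := cs.wordProd_surjective x
  have hπσ : π (χ ++ [k] ++ χ.reverse) = t := by
    rw [cs.wordProd_append, cs.wordProd_append, cs.wordProd_singleton, cs.wordProd_reverse,
      hχ, hxk]
  have hprod : π (τ ++ (χ ++ [k] ++ χ.reverse)) = π ω := by
    rw [cs.wordProd_append, hπσ, ← hτprod, mul_assoc, htt, mul_one]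
  have hpar := ris_count_parity cs hprod t
  rw [rightInvSeq_append cs, List.count_append] at hpar
  have hD : List.count t ((cs.rightInvSeq τ).map
      (fun y => (π (χ ++ [k] ++ χ.reverse))⁻¹ * y * π (χ ++ [k] ++ χ.reverse))) = 0 := by
    rw [List.count_eq_zero]
    intro hmm
    obtain ⟨y, hy, hyt⟩ := List.mem_map.mp hmm
    have hyt2 : y = t := by
      rw [hπσ] at hyt
      have h3 := congrArg (fun w => t * w * t⁻¹) hyt
      calc y = t * (t⁻¹ * y * t) * t⁻¹ := by group
        _ = t * t * t⁻¹ := by rw [hyt]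
        _ = t := by group
    rw [hyt2] at hy
    exact (List.count_eq_zero.mp hcτ) hy
  have hodd := count_ris_palindrome_odd cs χ k t (by rw [← hχ] at hxk; exact hxk)
  rw [hD, hc0, Nat.zero_add, pow_zero, Odd.neg_one_pow hodd] at hpar
  exact absurd hpar (by decide)

lemma exists_sublist_exchange {ω : List B} (hω : cs.IsReduced ω) {t : W}
    (ht : cs.IsReflection t) (hlt : ℓ (π ω * t) < ℓ (π ω)) :
    ∃ ω', ω' <+ ω ∧ π ω' = π ω * t := by
  have hmem := mem_rightInvSeq_of_isRightInversion cs hω ht hlt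
  obtain ⟨j, hj, hget⟩ := List.mem_iff_getElem.mp hmem
  refine ⟨ω.eraseIdx j, List.eraseIdx_sublist ω j, ?_⟩
  rw [← cs.wordProd_mul_getD_rightInvSeq ω j]
  congr 1
  rw [List.getD_eq_getElem _ _ hj, hget]

lemma exists_sublist_exchange_simple {ω : List B} (hω : cs.IsReduced ω) (i : B)
    (hlt : ℓ (π ω * s i) < ℓ (π ω)) : ∃ ω', ω' <+ ω ∧ π ω' = π ω * s i :=
  exists_sublist_exchange cs hω (cs.isReflection_simple i) hlt

lemma exists_reduced_sublist_aux : ∀ (n : ℕ) (ω : List B), ω.length ≤ n →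
    ∃ ω', ω' <+ ω ∧ cs.IsReduced ω' ∧ π ω' = π ω := by
  intro n
  induction n with
  | zero =>
    intro ω h
    rw [Nat.le_zero, List.length_eq_zero_iff] at h
    subst h
    exact ⟨[], List.Sublist.refl _, by simp [CoxeterSystem.IsReduced], rfl⟩
  | succ n ih =>
    intro ω hlen
    by_cases hred : cs.IsReduced ω
    · exact ⟨ω, List.Sublist.refl _, hred, rfl⟩
    · have hex : ∃ k, ¬ cs.IsReduced (ω.take k) := ⟨ω.length, by rwa [List.take_length]⟩
      classical
      have hk0pos : 0 < Nat.find hex := by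
        rcases Nat.eq_zero_or_pos (Nat.find hex) with h | h
        · exfalso
          apply Nat.find_spec hex
          rw [h]
          simp [CoxeterSystem.IsReduced]
        · exact h
      obtain ⟨k, hk⟩ : ∃ k, Nat.find hex = k + 1 := ⟨Nat.find hex - 1, by omega⟩
      have hk0spec : ¬ cs.IsReduced (ω.take (k+1)) := by
        have h6 := Nat.find_spec hex
        rwa [hk] at h6
      have hkred : cs.IsReduced (ω.take k) := by
        by_contra hcon
        have := Nat.find_le (h := hex) hcon
        omega
      have hklt : k + 1 ≤ ω.length := by
        have h6 : ¬ cs.IsReduced (ω.take ω.length) := by rwa [List.take_length]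
        have h7 := Nat.find_le (h := hex) h6
        omega
      have hkln : k < ω.length := by omega
      have htake : ω.take (k+1) = ω.take k ++ [ω[k]] := by
        rw [List.take_succ, List.getElem?_eq_getElem hkln]
        rfl
      have hvlen : ℓ (π (ω.take k)) = k := by
        have := hkred
        unfold CoxeterSystem.IsReduced at this
        rw [this, List.length_take]
        omega
      have hdesc : ℓ (π (ω.take k) * s (ω[k])) < ℓ (π (ω.take k)) := by
        rcases cs.length_mul_simple (π (ω.take k)) (ω[k]) with h | h
        · exfalso
          apply hk0spec
          unfold CoxeterSystem.IsReduced
          rw [htake, cs.wordProd_append, cs.wordProd_singleton, h, List.length_append,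
            List.length_take, List.length_singleton, hvlen]
          omega
        · omega
      obtain ⟨μ, hμsub, hμprod⟩ := exists_sublist_exchange_simple cs hkred (ω[k]) hdesc
      have hμlen : μ.length ≤ k := by
        have := hμsub.length_le
        rw [List.length_take] at this
        omega
      set ω2 := μ ++ ω.drop (k+1) with hω2
      have hω2sub : ω2 <+ ω := by
        have h1 : ω2 <+ ω.take (k+1) ++ ω.drop (k+1) := by
          apply List.Sublist.append
          · rw [htake]
            exact hμsub.trans (List.sublist_append_left _ _)
          · exact List.Sublist.refl _
        rwa [List.take_append_drop] at h1
      have hω2prod : π ω2 = π ω := by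
        rw [hω2, cs.wordProd_append, hμprod]
        conv_rhs => rw [← List.take_append_drop (k+1) ω]
        rw [cs.wordProd_append, htake, cs.wordProd_append, cs.wordProd_singleton]
      have hω2len : ω2.length ≤ n := by
        rw [hω2, List.length_append, List.length_drop]
        omega
      obtain ⟨ω', hsub', hred', hprod'⟩ := ih ω2 hω2len
      exact ⟨ω', hsub'.trans hω2sub, hred', hprod'.trans hω2prod⟩

lemma exists_reduced_sublist (ω : List B) :
    ∃ ω', ω' <+ ω ∧ cs.IsReduced ω' ∧ π ω' = π ω :=
  exists_reduced_sublist_aux cs ω.length ω le_rfl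

lemma bruhatLE_length {w u : W} (h : bruhatLE cs w u) : ℓ w ≤ ℓ u := by
  obtain ⟨ω, hred, hprod, ω', hsub, hprod'⟩ := h
  have h1 : ℓ w ≤ ω'.length := by rw [← hprod']; exact cs.length_wordProd_le ω'
  have h2 := hsub.length_le
  have h3 : ℓ u = ω.length := by rw [← hprod]; exact hred
  omega

lemma bruhatLT_mul_simple_iff (w : W) (i : B) :
    bruhatLT cs (w * s i) w ↔ ℓ (w * s i) < ℓ w := by
  constructor
  · rintro ⟨hle, hne⟩
    have h1 := bruhatLE_length cs hle
    have h2 := cs.length_mul_simple_ne w i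
    omega
  · intro h
    constructor
    · obtain ⟨σ, hσlen, hσprod⟩ := cs.exists_reduced_word (w * s i)
      refine ⟨σ ++ [i], ?_, ?_, σ, List.sublist_append_left _ _, hσprod.symm⟩
      · unfold CoxeterSystem.IsReduced
        rw [cs.wordProd_append, cs.wordProd_singleton, ← hσprod,
          cs.simple_mul_simple_cancel_right, List.length_append, List.length_singleton,
          ← (by rw [hσprod]; exact hσlen : ℓ (w * s i) = σ.length)]
        rcases cs.length_mul_simple w i with hh | hh <;> omega
      · rw [cs.wordProd_append, cs.wordProd_singleton, ← hσprod,
          cs.simple_mul_simple_cancel_right]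
    · intro heq
      exact cs.length_mul_simple_ne w i (by rw [heq])

lemma demR_eq (w : W) (i : B) :
    demR cs w i = if ℓ (w * s i) < ℓ w then w * s i else w := by
  unfold demR
  by_cases h : ℓ (w * s i) < ℓ w
  · rw [if_pos ((bruhatLT_mul_simple_iff cs w i).mpr h), if_pos h]
  · rw [if_neg (fun hc => h ((bruhatLT_mul_simple_iff cs w i).mp hc)), if_neg h]

lemma sublist_prod_mul_simple {τ τ' : List B} {w : W} (hsub : τ' <+ τ) (hprod : π τ' = w)
    (i : B) (hlt : ℓ (w * s i) < ℓ w) : ∃ τ'', τ'' <+ τ ∧ π τ'' = w * s i := by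
  obtain ⟨μ, hμsub, hμred, hμprod⟩ := exists_reduced_sublist cs τ'
  rw [hprod] at hμprod
  obtain ⟨ν, hνsub, hνprod⟩ := exists_sublist_exchange_simple cs hμred i
    (by rw [hμprod]; exact hlt)
  exact ⟨ν, hνsub.trans (hμsub.trans hsub), by rw [hνprod, hμprod]⟩

lemma demRword_nil (w : W) : demRword cs w [] = w := rfl

lemma demRword_cons (w : W) (i : B) (ω : List B) :
    demRword cs w (i :: ω) = demRword cs (demR cs w i) ω := rfl

lemma demRword_eq_one_iff : ∀ (ω : List B), cs.IsReduced ω → ∀ w : W,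
    (demRword cs w ω = 1 ↔ ∃ τ', τ' <+ ω.reverse ∧ π τ' = w) := by
  intro ω
  induction ω with
  | nil =>
    intro _ w
    rw [demRword_nil]
    constructor
    · intro h
      exact ⟨[], by simp, by simp [h.symm]⟩
    · rintro ⟨τ', hsub, hprod⟩
      rw [List.reverse_nil, List.sublist_nil] at hsub
      subst hsub
      simpa using hprod.symm
  | cons j ρ ih =>
    intro hred w
    have hρred : cs.IsReduced ρ := by
      have h0 := hred.drop 1
      simpa using h0
    rw [demRword_cons, ih hρred (demR cs w j)]
    have hrev : (j :: ρ).reverse = ρ.reverse ++ [j] := by simp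
    rw [hrev]
    constructor
    · rintro ⟨μ, hsub, hprod⟩
      by_cases hc : ℓ (w * s j) < ℓ w
      · rw [demR_eq, if_pos hc] at hprod
        refine ⟨μ ++ [j], List.Sublist.append hsub (List.Sublist.refl _), ?_⟩
        rw [cs.wordProd_append, cs.wordProd_singleton, hprod,
          cs.simple_mul_simple_cancel_right]
      · rw [demR_eq, if_neg hc] at hprod
        exact ⟨μ, hsub.trans (List.sublist_append_left _ _), hprod⟩
    · rintro ⟨τ', hsub, hprod⟩
      rcases List.sublist_append_iff.mp hsub with ⟨l₁, l₂, rfl, hl₁, hl₂⟩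
      have hl₂' : l₂ = [] ∨ l₂ = [j] := by
        rcases List.sublist_cons_iff.mp hl₂ with h | ⟨r, hr, hrs⟩
        · exact Or.inl (List.sublist_nil.mp h)
        · rw [List.sublist_nil.mp hrs] at hr
          exact Or.inr hr
      rcases hl₂' with rfl | rfl
      · rw [List.append_nil] at hprod
        by_cases hc : ℓ (w * s j) < ℓ w
        · rw [demR_eq, if_pos hc]
          exact sublist_prod_mul_simple cs hl₁ hprod j hc
        · rw [demR_eq, if_neg hc]
          exact ⟨l₁, hl₁, hprod⟩
      · have hw : w * s j = π l₁ := by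
          rw [← hprod, cs.wordProd_append, cs.wordProd_singleton,
            cs.simple_mul_simple_cancel_right]
        have h8 : π l₁ * s j = w := by
          rw [hw.symm, cs.simple_mul_simple_cancel_right]
        by_cases hc : ℓ (w * s j) < ℓ w
        · rw [demR_eq, if_pos hc]
          exact ⟨l₁, hl₁, hw.symm⟩
        · rw [demR_eq, if_neg hc]
          have hlt2 : ℓ (π l₁ * s j) < ℓ (π l₁) := by
            rw [h8, ← hw]
            rcases cs.length_mul_simple w j with hh | hh <;> omega
          obtain ⟨τ'', hs, hp⟩ := sublist_prod_mul_simple cs hl₁ rfl j hlt2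
          exact ⟨τ'', hs, by rw [hp, h8]⟩

/-- A single step in the Bruhat chain order: multiply by a reflection on the right,
increasing length. -/
def chainStep (x y : W) : Prop := ∃ t, cs.IsReflection t ∧ y = x * t ∧ ℓ x < ℓ y

/-- Chain version of the Bruhat order. -/
def chainLE : W → W → Prop := Relation.ReflTransGen (chainStep cs)

lemma isReflection_conj_simple (g : W) (j : B) : cs.IsReflection (g⁻¹ * s j * g) :=
  ⟨g⁻¹, j, by rw [inv_inv]⟩

lemma chainStep_up (x : W) (j : B) (h : ℓ x < ℓ (s j * x)) :
    chainStep cs x (s j * x) := by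
  refine ⟨x⁻¹ * s j * x, isReflection_conj_simple cs x j, ?_, h⟩
  have h1 : x * (x⁻¹ * s j * x) = s j * x := by group
  rw [h1]

lemma chainLE_subword {w u : W} (h : chainLE cs w u) :
    ∀ ρ : List B, cs.IsReduced ρ → π ρ = u →
      ∃ τ', τ' <+ ρ ∧ cs.IsReduced τ' ∧ π τ' = w := by
  induction h with
  | refl =>
    intro ρ hred hprod
    exact ⟨ρ, List.Sublist.refl _, hred, hprod⟩
  | tail hchain hstep ih =>
    rename_i x y
    intro ρ hred hprod
    obtain ⟨t, htrefl, hyx, hlt⟩ := hstep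
    have hyt : π ρ * t = x := by
      rw [hprod, hyx, mul_assoc, htrefl.mul_self, mul_one]
    have hlt2 : ℓ (π ρ * t) < ℓ (π ρ) := by rw [hyt, hprod]; exact hlt
    obtain ⟨ν, hνsub, hνprod⟩ := exists_sublist_exchange cs hred htrefl hlt2
    obtain ⟨ν', hν'sub, hν'red, hν'prod⟩ := exists_reduced_sublist cs ν
    have hx : π ν' = x := by rw [hν'prod, hνprod, hyt]
    obtain ⟨τ', hs, hr, hp⟩ := ih ν' hν'red hx
    exact ⟨τ', hs.trans (hν'sub.trans hνsub), hr, hp⟩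

lemma chain_AB : ∀ n : ℕ,
    (∀ τ : List B, τ.length ≤ n → cs.IsReduced τ → ∀ τ', τ' <+ τ → cs.IsReduced τ' →
      chainLE cs (π τ') (π τ)) ∧
    (∀ u₁ : W, ℓ u₁ ≤ n → ∀ w₁, chainLE cs w₁ u₁ → ∀ j : B, ℓ u₁ < ℓ (s j * u₁) →
      chainLE cs (s j * w₁) (s j * u₁)) := by
  intro n
  induction n using Nat.strong_induction_on with
  | _ n ih =>
  constructor
  · -- part A
    intro τ hτn hτred τ' hsub hτ'red
    cases τ with
    | nil =>
      rw [List.sublist_nil.mp hsub]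
      exact Relation.ReflTransGen.refl
    | cons j ρ =>
      have hn1 : 1 ≤ n := le_trans (by simp) hτn
      have hρred : cs.IsReduced ρ := by
        have h0 := hτred.drop 1
        simpa using h0
      have hρlen : ρ.length ≤ n - 1 := by
        have := hτn
        simp only [List.length_cons] at this
        omega
      have hasc : ℓ (π ρ) < ℓ (s j * π ρ) := by
        have h1 : ℓ (π (j :: ρ)) = ρ.length + 1 := by
          rw [hτred]; simp
        have h2 : ℓ (π ρ) = ρ.length := hρred
        rw [cs.wordProd_cons] at h1
        omega
      rcases List.sublist_cons_iff.mp hsub with h | ⟨r, rfl, hr⟩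
      · have hc := (ih (n-1) (by omega)).1 ρ hρlen hρred τ' h hτ'red
        rw [cs.wordProd_cons]
        exact hc.tail (chainStep_up cs (π ρ) j hasc)
      · have hrred : cs.IsReduced r := by
          have h0 := hτ'red.drop 1
          simpa using h0
        have hc := (ih (n-1) (by omega)).1 ρ hρlen hρred r hr hrred
        have hB := (ih (n-1) (by omega)).2 (π ρ) (by rw [hρred]; omega) (π r) hc j hasc
        rw [cs.wordProd_cons, cs.wordProd_cons]
        exact hB
  · -- part B
    intro u₁ hu₁n w₁ hchain j hasc
    rcases Relation.ReflTransGen.cases_tail hchain with heq | ⟨x, hwx, hstep⟩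
    · rw [heq]
      exact Relation.ReflTransGen.refl
    · obtain ⟨t, htrefl, hxy, hlt⟩ := hstep
      have hn1 : 1 ≤ n := by omega
      have hs2 : chainStep cs u₁ (s j * u₁) := chainStep_up cs u₁ j hasc
      by_cases hxasc : ℓ x < ℓ (s j * x)
      · have hBx := (ih (n-1) (by omega)).2 x (by omega) w₁ hwx j hxasc
        refine hBx.tail ⟨t, htrefl, ?_, ?_⟩
        · rw [hxy, mul_assoc]
        · rcases cs.length_simple_mul x j with d1 | d1 <;>
            rcases cs.length_simple_mul u₁ j with d2 | d2 <;> omega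
      · by_cases hwasc : ℓ (s j * w₁) < ℓ w₁
        · have hs1 : chainStep cs (s j * w₁) w₁ := by
            refine ⟨w₁⁻¹ * s j * w₁, isReflection_conj_simple cs w₁ j, ?_, hwasc⟩
            have h1 : (s j * w₁) * (w₁⁻¹ * s j * w₁) = s j * (s j * w₁) := by group
            rw [h1, cs.simple_mul_simple_cancel_left]
          exact Relation.ReflTransGen.head hs1 (hchain.tail hs2)
        · -- Lemma M : the hard case
          have hwup : ℓ (s j * w₁) = ℓ w₁ + 1 := by
            rcases cs.length_simple_mul w₁ j with d | d <;> omega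
          have hxdesc : ℓ (s j * x) + 1 = ℓ x := by
            rcases cs.length_simple_mul x j with d | d <;> omega
          obtain ⟨σ, hσlen, hσprod⟩ := cs.exists_reduced_word (s j * x)
          have hjσprod : π (j :: σ) = x := by
            rw [cs.wordProd_cons, ← hσprod, cs.simple_mul_simple_cancel_left]
          have hjσred : cs.IsReduced (j :: σ) := by
            unfold CoxeterSystem.IsReduced
            rw [hjσprod, List.length_cons, ← (by rw [hσprod]; exact hσlen : ℓ (s j * x) = σ.length)]
            omega
          obtain ⟨τ', hτ's, hτ'red, hτ'p⟩ := chainLE_subword cs hwx (j :: σ) hjσred hjσprod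
          rcases List.sublist_cons_iff.mp hτ's with h | ⟨r, hreq, hrs⟩
          · -- τ' <+ σ
            have hlτ' : τ'.length = ℓ w₁ := by rw [← hτ'red, hτ'p]
            have hred2 : cs.IsReduced (j :: τ') := by
              unfold CoxeterSystem.IsReduced
              rw [cs.wordProd_cons, hτ'p, List.length_cons, hwup, hlτ']
            have hjσlen : (j :: σ).length ≤ n - 1 := by
              rw [List.length_cons, ← (by rw [hσprod]; exact hσlen : ℓ (s j * x) = σ.length)]
              omega
            have hA := (ih (n-1) (by omega)).1 (j :: σ) hjσlen hjσred (j :: τ')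
              (List.cons_sublist_cons.mpr h) hred2
            rw [hjσprod, cs.wordProd_cons, hτ'p] at hA
            exact (hA.tail ⟨t, htrefl, hxy, hlt⟩).tail hs2
          · -- τ' = j :: r : contradiction
            have hw1 : w₁ = s j * π r := by
              rw [← hτ'p, hreq, cs.wordProd_cons]
            have hl1 : ℓ (s j * w₁) ≤ r.length := by
              rw [hw1, cs.simple_mul_simple_cancel_left]
              exact cs.length_wordProd_le r
            have hl2 : τ'.length = ℓ w₁ := by rw [← hτ'red, hτ'p]
            rw [hreq] at hl2
            simp only [List.length_cons] at hl2
            omega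

/-- `w ◁ u⁻¹ = e` iff `w ≤ u` in Bruhat order, where `u⁻¹` acts via any of its
reduced expressions. -/
theorem demR_inv_eq_one_iff (u w : W) (ω : List B)
    (hω : cs.IsReduced ω) (hωu : cs.wordProd ω = u⁻¹) :
    demRword cs w ω = 1 ↔ bruhatLE cs w u := by
  rw [demRword_eq_one_iff cs ω hω w]
  have hrevred : cs.IsReduced ω.reverse := (cs.isReduced_reverse_iff ω).mpr hω
  have hrevprod : cs.wordProd ω.reverse = u := by rw [cs.wordProd_reverse, hωu, inv_inv]
  constructor
  · rintro ⟨τ', hsub, hprod⟩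
    exact ⟨ω.reverse, hrevred, hrevprod, τ', hsub, hprod⟩
  · intro h
    obtain ⟨τ, hτred, hτprod, τ'', hsub'', hprod''⟩ := h
    obtain ⟨τ₀, hτ₀sub, hτ₀red, hτ₀prod⟩ := exists_reduced_sublist cs τ''
    have hchain := (chain_AB cs τ.length).1 τ le_rfl hτred τ₀ (hτ₀sub.trans hsub'') hτ₀red
    rw [hτ₀prod, hprod'', hτprod] at hchain
    obtain ⟨τ', hs, _, hp⟩ := chainLE_subword cs hchain ω.reverse hrevred hrevprod
    exact ⟨τ', hs, hp⟩

end DBS
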